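/- Let G be a graph and let t, t' be exchangeable tubes of G, with T, T' adjacent maximal tubings satisfying T \ {t} = T' \ {t'}. Then t ∪ t' is a tube belonging to both T and T', every connected component of the induced subgraph on t ∩ t' is a tube belonging to both T and T', and the characteristic vectors satisfy χ(t) + χ(t') = χ(t ∪ t') + Σ_{s ∈ cc(t ∩ t')} χ(s). -/

import Mathlib

open scoped Classical

variable {V : Type*} [Fintype V] [DecidableEq V]

/-- A tube of `G`: a nonempty vertex subset inducing a connected subgraph. -/
def IsTube (G : SimpleGraph V) (t : Finset V) : Prop :=
  t.Nonempty ∧ (G.induce (t : Set V)).Connected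

/-- The set of all tubes of `G`. -/
noncomputable def tubes (G : SimpleGraph V) : Finset (Finset V) :=
  Finset.univ.powerset.filter (fun t => IsTube G t)

/-- Compatibility of tubes: nested, or disjoint with non-tube union. -/
def Compatible (G : SimpleGraph V) (t t' : Finset V) : Prop :=
  t ⊆ t' ∨ t' ⊆ t ∨ (t ∩ t' = ∅ ∧ ¬ IsTube G (t ∪ t'))

/-- A tubing on `G`: pairwise compatible tubes containing all connected components
(that is, all inclusion-maximal tubes). -/
def IsTubing (G : SimpleGraph V) (T : Finset (Finset V)) : Prop :=
  (∀ t ∈ T, IsTube G t) ∧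
  (∀ t ∈ T, ∀ t' ∈ T, Compatible G t t') ∧
  (∀ K : Finset V, IsTube G K → (∀ t : Finset V, IsTube G t → K ⊆ t → K = t) → K ∈ T)

/-- A maximal tubing on `G`. -/
def IsMaxTubing (G : SimpleGraph V) (T : Finset (Finset V)) : Prop :=
  IsTubing G T ∧ ∀ T', IsTubing G T' → T ⊆ T' → T = T'

/-- Two tubes are exchangeable if two maximal tubings differ exactly by them. -/
def ExchangeableT (G : SimpleGraph V) (t t' : Finset V) : Prop :=
  t ≠ t' ∧ ∃ T T', IsMaxTubing G T ∧ IsMaxTubing G T' ∧ t ∈ T ∧ t' ∈ T' ∧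
    T.erase t = T'.erase t'

/-- `u` is a neighbor of the vertex set `s`: `u ∉ s` and `u` is adjacent to some vertex of `s`. -/
def NbrOf (G : SimpleGraph V) (s : Finset V) (u : V) : Prop :=
  u ∉ s ∧ ∃ x ∈ s, G.Adj u x

/-- Connected components of the induced subgraph on `U`:
inclusion-maximal tubes contained in `U`. -/
noncomputable def gccSet (G : SimpleGraph V) (U : Finset V) : Finset (Finset V) :=
  (tubes G).filter (fun K => K ⊆ U ∧ ∀ C : Finset V, IsTube G C → C ⊆ U → K ⊆ C → K = C)

/-- Characteristic vector of a subset of `V` in `ℝ^V`. -/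
def chi (S : Finset V) : V → ℝ := fun v => if v ∈ S then 1 else 0

/-- `w` is a non-disconnecting vertex of the set `s`. -/
def NonDisc (G : SimpleGraph V) (s : Finset V) (w : V) : Prop :=
  w ∈ s ∧ (s.erase w = ∅ ∨ IsTube G (s.erase w))


set_option linter.unusedSectionVars false in
lemma singleton_tube (G : SimpleGraph V) (v : V) : IsTube G {v} := by
  refine ⟨⟨v, Finset.mem_singleton_self v⟩, ?_⟩
  rw [SimpleGraph.connected_iff_exists_forall_reachable]
  refine ⟨⟨v, by simp⟩, ?_⟩
  rintro ⟨w, hw⟩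
  have : w = v := by simpa using hw
  subst this
  rfl

set_option linter.unusedSectionVars false in
lemma tube_union_of_inter {G : SimpleGraph V} {s s' : Finset V}
    (h1 : IsTube G s) (h2 : IsTube G s') (h : (s ∩ s').Nonempty) :
    IsTube G (s ∪ s') := by
  obtain ⟨x, hx⟩ := h
  refine ⟨⟨x, Finset.mem_union_left _ (Finset.mem_inter.1 hx).1⟩, ?_⟩
  rw [Finset.coe_union]
  exact SimpleGraph.induce_union_connected h1.2.preconnected h2.2.preconnected
    ⟨x, by simpa [Finset.mem_inter] using hx⟩

set_option linter.unusedSectionVars false in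
lemma tube_union_of_adj {G : SimpleGraph V} {s s' : Finset V}
    (h1 : IsTube G s) (h2 : IsTube G s') {x y : V} (hx : x ∈ s) (hy : y ∈ s')
    (hxy : G.Adj x y) : IsTube G (s ∪ s') := by
  refine ⟨⟨x, Finset.mem_union_left _ hx⟩, ?_⟩
  rw [Finset.coe_union]
  exact SimpleGraph.connected_induce_union h1.2.preconnected h2.2.preconnected hx hy hxy

set_option linter.unusedSectionVars false in
lemma exists_adj_of_union_tube {G : SimpleGraph V} {s s' : Finset V}
    (hs : s.Nonempty) (hs' : s'.Nonempty) (hd : s ∩ s' = ∅)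
    (h : IsTube G (s ∪ s')) : ∃ x ∈ s, ∃ y ∈ s', G.Adj x y := by
  by_contra hno
  push_neg at hno
  have key : ∀ (a b : ((s ∪ s' : Finset V) : Set V))
      (_ : (G.induce ((s ∪ s' : Finset V) : Set V)).Walk a b), (↑a ∈ s) → ↑b ∈ s := by
    intro a b p
    induction p with
    | nil => exact id
    | @cons u c w h' p ih =>
      intro ha
      apply ih
      have hadj : G.Adj ↑u ↑c := h'
      have hc : ↑c ∈ s ∪ s' := by exact_mod_cast c.2
      rcases Finset.mem_union.1 hc with hc | hc
      · exact hc
      · exact absurd hadj (hno ↑u ha ↑c hc)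
  obtain ⟨x, hx⟩ := hs
  obtain ⟨y, hy⟩ := hs'
  have hxm : x ∈ s ∪ s' := Finset.mem_union_left _ hx
  have hym : y ∈ s ∪ s' := Finset.mem_union_right _ hy
  obtain ⟨w⟩ := h.2.preconnected ⟨x, by exact_mod_cast hxm⟩ ⟨y, by exact_mod_cast hym⟩
  have : y ∈ s := key _ _ w hx
  have : y ∈ s ∩ s' := Finset.mem_inter.2 ⟨this, hy⟩
  simp [hd] at this

set_option linter.unusedSectionVars false in
lemma compat_symm {G : SimpleGraph V} {a b : Finset V} (h : Compatible G a b) :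
    Compatible G b a := by
  rcases h with h | h | ⟨h1, h2⟩
  · exact Or.inr (Or.inl h)
  · exact Or.inl h
  · exact Or.inr (Or.inr ⟨by rwa [Finset.inter_comm], by rwa [Finset.union_comm]⟩)

lemma mem_gccSet_iff {G : SimpleGraph V} {U K : Finset V} :
    K ∈ gccSet G U ↔ IsTube G K ∧ K ⊆ U ∧
      ∀ C : Finset V, IsTube G C → C ⊆ U → K ⊆ C → K = C := by
  simp [gccSet, tubes, Finset.mem_filter, Finset.mem_powerset, and_assoc]

lemma exists_max_tube {G : SimpleGraph V} {U K : Finset V} (hK : IsTube G K) (hKU : K ⊆ U) :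
    ∃ K' ∈ gccSet G U, K ⊆ K' := by
  classical
  set S := U.powerset.filter (fun C => IsTube G C ∧ K ⊆ C) with hS
  have hKS : K ∈ S := by simp [hS, Finset.mem_powerset, hKU, hK]
  obtain ⟨C, hCS, hCmax⟩ := S.exists_max_image (fun C => C.card) ⟨K, hKS⟩
  simp only [hS, Finset.mem_filter, Finset.mem_powerset] at hCS
  refine ⟨C, mem_gccSet_iff.2 ⟨hCS.2.1, hCS.1, ?_⟩, hCS.2.2⟩
  intro D hD hDU hCD
  have hDS : D ∈ S := by
    simp only [hS, Finset.mem_filter, Finset.mem_powerset]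
    exact ⟨hDU, hD, hCS.2.2.trans hCD⟩
  exact Finset.eq_of_subset_of_card_le hCD (hCmax D hDS)

lemma mem_of_compat_all {G : SimpleGraph V} {T : Finset (Finset V)}
    (hT : IsMaxTubing G T) {x : Finset V} (hx : IsTube G x)
    (h : ∀ s ∈ T, Compatible G x s) : x ∈ T := by
  have htub : IsTubing G (insert x T) := by
    refine ⟨?_, ?_, ?_⟩
    · intro s hs
      rcases Finset.mem_insert.1 hs with rfl | hs
      exacts [hx, hT.1.1 s hs]
    · intro a ha b hb
      rcases Finset.mem_insert.1 ha with ha' | ha'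
      · rcases Finset.mem_insert.1 hb with hb' | hb'
        · rw [ha', hb']; exact Or.inl (Finset.Subset.refl _)
        · rw [ha']; exact h b hb'
      · rcases Finset.mem_insert.1 hb with hb' | hb'
        · rw [hb']; exact compat_symm (h a ha')
        · exact hT.1.2.1 a ha' b hb'
    · intro K hK hKmax
      exact Finset.mem_insert_of_mem (hT.1.2.2 K hK hKmax)
  have := hT.2 _ htub (Finset.subset_insert x T)
  rw [this]
  exact Finset.mem_insert_self x T

set_option linter.unusedSectionVars false in
lemma inter_eq_empty_of_subset {K u s : Finset V} (h : K ⊆ u) (hd : s ∩ u = ∅) :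
    K ∩ s = ∅ := by
  rw [Finset.eq_empty_iff_forall_notMem] at hd ⊢
  intro a ha
  rcases Finset.mem_inter.1 ha with ⟨haK, has⟩
  exact hd a (Finset.mem_inter.2 ⟨has, h haK⟩)

lemma main_aux (G : SimpleGraph V) (t t' : Finset V)
    (T T' : Finset (Finset V)) (hT : IsMaxTubing G T) (hT' : IsMaxTubing G T')
    (ht : t ∈ T) (ht' : t' ∈ T') (hne : t ≠ t') (hadj : T.erase t = T'.erase t') :
    t ∪ t' ∈ T ∧ ∀ K ∈ gccSet G (t ∩ t'), K ∈ T := by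
  have htt : IsTube G t := hT.1.1 t ht
  have htt' : IsTube G t' := hT'.1.1 t' ht'
  have ht'nT : t' ∉ T := by
    intro h
    have h2 : t' ∈ T.erase t := Finset.mem_erase.2 ⟨hne.symm, h⟩
    rw [hadj] at h2
    exact (Finset.mem_erase.1 h2).1 rfl
  have hmemT' : ∀ s ∈ T, s ≠ t → s ∈ T' := by
    intro s hs hst
    have : s ∈ T.erase t := Finset.mem_erase.2 ⟨hst, hs⟩
    rw [hadj] at this
    exact Finset.mem_of_mem_erase this
  have hincomp : ¬ Compatible G t t' := by
    intro hc
    apply ht'nT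
    apply mem_of_compat_all hT htt'
    intro s hs
    by_cases hst : s = t
    · subst hst
      exact compat_symm hc
    · exact compat_symm (hT'.1.2.1 s (hmemT' s hs hst) t' ht')
  have hdisj_imp : t ∩ t' = ∅ → IsTube G (t ∪ t') := by
    intro he
    by_contra hnot
    exact hincomp (Or.inr (Or.inr ⟨he, hnot⟩))
  have huu : IsTube G (t ∪ t') := by
    rcases Finset.eq_empty_or_nonempty (t ∩ t') with he | hne2
    · exact hdisj_imp he
    · exact tube_union_of_inter htt htt' hne2
  have hedge : t ∩ t' = ∅ → ∃ x ∈ t, ∃ y ∈ t', G.Adj x y := fun he =>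
    exists_adj_of_union_tube htt.1 htt'.1 he (hdisj_imp he)
  have hkill : ∀ s ∈ T, s ≠ t → t ⊆ s → s ∩ t' = ∅ → False := by
    intro s hs hst hts hd
    have hsT' := hmemT' s hs hst
    have hdtt' : t ∩ t' = ∅ := by
      rw [Finset.eq_empty_iff_forall_notMem]
      intro a ha
      rcases Finset.mem_inter.1 ha with ⟨hat, hat'⟩
      have h2 : a ∈ s ∩ t' := Finset.mem_inter.2 ⟨hts hat, hat'⟩
      rw [hd] at h2
      exact Finset.notMem_empty a h2
    obtain ⟨x, hx, y, hy, hxy⟩ := hedge hdtt'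
    have htube : IsTube G (s ∪ t') := tube_union_of_adj (hT.1.1 s hs) htt' (hts hx) hy hxy
    have hc := hT'.1.2.1 s hsT' t' ht'
    rcases hc with h | h | ⟨_, h⟩
    · have : x ∈ s ∩ t' := Finset.mem_inter.2 ⟨hts hx, h (hts hx)⟩
      rw [hd] at this
      exact Finset.notMem_empty x this
    · have : y ∈ s ∩ t' := Finset.mem_inter.2 ⟨h hy, hy⟩
      rw [hd] at this
      exact Finset.notMem_empty y this
    · exact h htube
  have hkill' : ∀ s ∈ T, s ≠ t → t' ⊆ s → s ∩ t = ∅ → False := by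
    intro s hs hst hts hd
    have hdtt' : t ∩ t' = ∅ := by
      rw [Finset.eq_empty_iff_forall_notMem]
      intro a ha
      rcases Finset.mem_inter.1 ha with ⟨hat, hat'⟩
      have : a ∈ s ∩ t := Finset.mem_inter.2 ⟨hts hat', hat⟩
      rw [hd] at this
      exact Finset.notMem_empty a this
    obtain ⟨x, hx, y, hy, hxy⟩ := hedge hdtt'
    have htube : IsTube G (s ∪ t) := tube_union_of_adj (hT.1.1 s hs) htt (hts hy) hx hxy.symm
    have hc := hT.1.2.1 s hs t ht
    rcases hc with h | h | ⟨_, h⟩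
    · have : y ∈ s ∩ t := Finset.mem_inter.2 ⟨hts hy, h (hts hy)⟩
      rw [hd] at this
      exact Finset.notMem_empty y this
    · have : x ∈ s ∩ t := Finset.mem_inter.2 ⟨h hx, hx⟩
      rw [hd] at this
      exact Finset.notMem_empty x this
    · exact h htube
  have hcompatU : ∀ s ∈ T, Compatible G (t ∪ t') s := by
    intro s hs
    by_cases hst : s = t
    · subst hst
      exact Or.inr (Or.inl Finset.subset_union_left)
    have hsT' := hmemT' s hs hst
    have c1 := hT.1.2.1 s hs t ht
    rcases c1 with h1 | h1 | ⟨h1, h1'⟩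
    · exact Or.inr (Or.inl (h1.trans Finset.subset_union_left))
    · have c2 := hT'.1.2.1 s hsT' t' ht'
      rcases c2 with h2 | h2 | ⟨h2, h2'⟩
      · exact Or.inr (Or.inl (h2.trans Finset.subset_union_right))
      · exact Or.inl (Finset.union_subset h1 h2)
      · exact (hkill s hs hst h1 h2).elim
    · have c2 := hT'.1.2.1 s hsT' t' ht'
      rcases c2 with h2 | h2 | ⟨h2, h2'⟩
      · exact Or.inr (Or.inl (h2.trans Finset.subset_union_right))
      · exact (hkill' s hs hst h2 h1).elim
      · have hd : s ∩ (t ∪ t') = ∅ := by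
          rw [Finset.eq_empty_iff_forall_notMem]
          intro a ha
          rcases Finset.mem_inter.1 ha with ⟨has, hau⟩
          rcases Finset.mem_union.1 hau with h | h
          · have : a ∈ s ∩ t := Finset.mem_inter.2 ⟨has, h⟩
            rw [h1] at this
            exact Finset.notMem_empty a this
          · have : a ∈ s ∩ t' := Finset.mem_inter.2 ⟨has, h⟩
            rw [h2] at this
            exact Finset.notMem_empty a this
        refine Or.inr (Or.inr ⟨by rwa [Finset.inter_comm], ?_⟩)
        intro hbad
        obtain ⟨x, hx, y, hy, hxy⟩ := exists_adj_of_union_tube (hT.1.1 s hs).1 huu.1 hd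
          (by rwa [Finset.union_comm] at hbad)
        rcases Finset.mem_union.1 hy with hy | hy
        · exact h1' (tube_union_of_adj (hT.1.1 s hs) htt hx hy hxy)
        · exact h2' (tube_union_of_adj (hT.1.1 s hs) htt' hx hy hxy)
  refine ⟨mem_of_compat_all hT huu hcompatU, ?_⟩
  intro K hK
  obtain ⟨hKt, hKU, hKmax⟩ := mem_gccSet_iff.1 hK
  apply mem_of_compat_all hT hKt
  intro s hs
  by_cases hst : s = t
  · subst hst
    exact Or.inl (hKU.trans Finset.inter_subset_left)
  have hsT' := hmemT' s hs hst
  have hstube := hT.1.1 s hs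
  have c1 := hT.1.2.1 s hs t ht
  rcases c1 with h1 | h1 | ⟨h1, h1'⟩
  · -- s ⊆ t
    have c2 := hT'.1.2.1 s hsT' t' ht'
    rcases c2 with h2 | h2 | ⟨h2, h2'⟩
    · -- s ⊆ t'
      have hsU : s ⊆ t ∩ t' := Finset.subset_inter h1 h2
      by_cases hint : (K ∩ s).Nonempty
      · have htu : IsTube G (K ∪ s) := tube_union_of_inter hKt hstube hint
        have heq := hKmax (K ∪ s) htu (Finset.union_subset hKU hsU) Finset.subset_union_left
        refine Or.inr (Or.inl ?_)
        rw [heq]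
        exact Finset.subset_union_right
      · refine Or.inr (Or.inr ⟨Finset.not_nonempty_iff_eq_empty.1 hint, ?_⟩)
        intro hbad
        have heq := hKmax (K ∪ s) hbad (Finset.union_subset hKU hsU) Finset.subset_union_left
        obtain ⟨a, ha⟩ := hstube.1
        have haK : a ∈ K := by
          rw [heq]
          exact Finset.mem_union_right _ ha
        exact hint ⟨a, Finset.mem_inter.2 ⟨haK, ha⟩⟩
    · exact Or.inl ((hKU.trans Finset.inter_subset_right).trans h2)
    · have hKs : K ∩ s = ∅ := inter_eq_empty_of_subset (hKU.trans Finset.inter_subset_right) h2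
      refine Or.inr (Or.inr ⟨hKs, ?_⟩)
      intro hbad
      obtain ⟨x, hx, y, hy, hxy⟩ := exists_adj_of_union_tube hKt.1 hstube.1 hKs hbad
      exact h2' (tube_union_of_adj hstube htt' hy
        ((Finset.mem_inter.1 (hKU hx)).2) hxy.symm)
  · exact Or.inl ((hKU.trans Finset.inter_subset_left).trans h1)
  · have hKs : K ∩ s = ∅ := inter_eq_empty_of_subset (hKU.trans Finset.inter_subset_left) h1
    refine Or.inr (Or.inr ⟨hKs, ?_⟩)
    intro hbad
    obtain ⟨x, hx, y, hy, hxy⟩ := exists_adj_of_union_tube hKt.1 hstube.1 hKs hbad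
    exact h1' (tube_union_of_adj hstube htt hy ((Finset.mem_inter.1 (hKU hx)).1) hxy.symm)

lemma sum_gcc (G : SimpleGraph V) (U : Finset V) :
    ∑ K ∈ gccSet G U, chi K = chi U := by
  funext v
  rw [Finset.sum_apply]
  by_cases hv : v ∈ U
  · obtain ⟨K0, hK0, hvK0⟩ := exists_max_tube (singleton_tube G v)
      (Finset.singleton_subset_iff.2 hv)
    have hvK0' : v ∈ K0 := hvK0 (Finset.mem_singleton_self v)
    rw [Finset.sum_eq_single_of_mem K0 hK0]
    · simp [chi, hvK0', hv]
    · intro b hb hbne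
      simp only [chi]
      rw [if_neg]
      intro hvb
      obtain ⟨hbt, hbU, hbmax⟩ := mem_gccSet_iff.1 hb
      obtain ⟨h0t, h0U, h0max⟩ := mem_gccSet_iff.1 hK0
      have hu : IsTube G (b ∪ K0) := tube_union_of_inter hbt h0t
        ⟨v, Finset.mem_inter.2 ⟨hvb, hvK0'⟩⟩
      have e1 := hbmax (b ∪ K0) hu (Finset.union_subset hbU h0U) Finset.subset_union_left
      have e2 := h0max (b ∪ K0) hu (Finset.union_subset hbU h0U) Finset.subset_union_right
      exact hbne (e1.trans e2.symm)
  · rw [Finset.sum_eq_zero, chi]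
    · simp [hv]
    · intro b hb
      simp only [chi]
      rw [if_neg]
      intro hvb
      exact hv ((mem_gccSet_iff.1 hb).2.1 hvb)

theorem stmt12 (G : SimpleGraph V) (t t' : Finset V)
    (T T' : Finset (Finset V)) (hT : IsMaxTubing G T) (hT' : IsMaxTubing G T')
    (ht : t ∈ T) (ht' : t' ∈ T') (hne : t ≠ t') (hadj : T.erase t = T'.erase t') :
    IsTube G (t ∪ t') ∧ t ∪ t' ∈ T ∧ t ∪ t' ∈ T' ∧
    (∀ K ∈ gccSet G (t ∩ t'), K ∈ T ∧ K ∈ T') ∧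
    chi t + chi t' = chi (t ∪ t') + ∑ K ∈ gccSet G (t ∩ t'), chi K := by
  obtain ⟨hUT, hcomp⟩ := main_aux G t t' T T' hT hT' ht ht' hne hadj
  obtain ⟨hUT', hcomp'⟩ := main_aux G t' t T' T hT' hT ht' ht hne.symm hadj.symm
  rw [Finset.union_comm] at hUT'
  have hcomp'' : ∀ K ∈ gccSet G (t ∩ t'), K ∈ T' := by
    rw [Finset.inter_comm]
    exact hcomp'
  refine ⟨hT.1.1 _ hUT, hUT, hUT', fun K hK => ⟨hcomp K hK, hcomp'' K hK⟩, ?_⟩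
  rw [sum_gcc]
  funext v
  by_cases h1 : v ∈ t <;> by_cases h2 : v ∈ t' <;>
    simp [chi, h1, h2, Finset.mem_union, Finset.mem_inter]
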